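/- If M = [[A, 0, 0],[0, K_SS, K_SX],[0, K_XS, K_XX]] with A positive definite and the lower-right 2×2 block invertible with K_XX positive definite, and v = [B, K_XS, K_XX] (block row), then v M⁻¹ vᵀ = B A⁻¹ Bᵀ + K_XX. -/

import Mathlib

open Matrix

theorem augmented_nystrom_quadratic_form {M N : ℕ}
    (A : Matrix (Fin M) (Fin M) ℝ) (hA : A.PosDef)
    (B : Matrix (Fin N) (Fin M) ℝ)
    (KSS : Matrix (Fin M) (Fin M) ℝ) (KXS : Matrix (Fin N) (Fin M) ℝ)
    (KXX : Matrix (Fin N) (Fin N) ℝ) (hXX : KXX.PosDef)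
    (hLR : IsUnit (fromBlocks KSS KXSᵀ KXS KXX).det) :
    (fromCols B (fromCols KXS KXX)) *
        (fromBlocks A 0 0 (fromBlocks KSS KXSᵀ KXS KXX))⁻¹ *
        (fromCols B (fromCols KXS KXX))ᵀ
      = B * A⁻¹ * Bᵀ + KXX := by
  set D := fromBlocks KSS KXSᵀ KXS KXX with hD
  have hAu : IsUnit A := (Matrix.isUnit_iff_isUnit_det A).mpr hA.det_pos.ne'.isUnit
  have hDu : IsUnit D := (Matrix.isUnit_iff_isUnit_det D).mpr hLR
  have hinv : (fromBlocks A 0 0 D)⁻¹ = fromBlocks A⁻¹ 0 0 D⁻¹ := by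
    rw [Matrix.inv_fromBlocks_zero₂₁_of_isUnit_iff A 0 D (iff_of_true hAu hDu)]
    simp
  have hKXXsymm : KXXᵀ = KXX := hXX.1
  have hcol : fromRows KXSᵀ KXX = D * fromRows (0 : Matrix (Fin M) (Fin N) ℝ) (1 : Matrix (Fin N) (Fin N) ℝ) := by
    rw [fromBlocks_mul_fromRows]
    simp
  have hterm : fromCols KXS KXX * D⁻¹ * fromRows KXSᵀ KXX = KXX := by
    rw [hcol, Matrix.mul_assoc, ← Matrix.mul_assoc D⁻¹,
      Matrix.nonsing_inv_mul D hLR, Matrix.one_mul, fromCols_mul_fromRows]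
    simp
  rw [hinv, transpose_fromCols, transpose_fromCols, hKXXsymm,
    fromCols_mul_fromBlocks]
  simp only [Matrix.mul_zero, Matrix.zero_mul, add_zero, zero_add]
  rw [fromCols_mul_fromRows, hterm]
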